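/- The map T : {1,2}^ℕ → {1,2}^ℕ defined by (T w)_k = 1 if the number of maximal constant segments of the finite word w₁ w₂ … w_{k+1} is even, and (T w)_k = 2 if it is odd, is continuous and has topological entropy at least log 2. -/

import Mathlib

/-- The map `T` on `{1,2}^ℕ` (modelled as `ℕ → Bool`, coordinate `j : ℕ` standing for the
`(j+1)`-st coordinate): `(T w)_k = 1` iff the number of maximal constant segments of the
finite word `w₁ … w_{k+2}` (namely `1 + #{j ≤ k : w_j ≠ w_{j+1}}`) is even. -/
def segParityMap (w : ℕ → Bool) : ℕ → Bool := fun k =>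
  decide (Even (1 + ((Finset.range (k + 1)).filter fun j => w j ≠ w (j + 1)).card))

open Dynamics Filter Set Uniformity

lemma decide_even_succ (n : ℕ) : decide (Even (n + 1)) = !decide (Even n) := by
  simp only [Nat.even_add_one, decide_not]

/-- `segParityMap w k` only depends on `w 0, …, w (k+1)`. -/
lemma seg_dep {k : ℕ} {w w' : ℕ → Bool} (h : ∀ i ≤ k + 1, w i = w' i) :
    segParityMap w k = segParityMap w' k := by
  unfold segParityMap
  have : ((Finset.range (k + 1)).filter fun j => w j ≠ w (j + 1))
      = ((Finset.range (k + 1)).filter fun j => w' j ≠ w' (j + 1)) := by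
    apply Finset.filter_congr
    intro j hj
    rw [Finset.mem_range] at hj
    rw [h j (by omega), h (j + 1) (by omega)]
  rw [this]

/-- Flipping `w (k+1)` while fixing `w 0, …, w k` flips `segParityMap w k`. -/
lemma seg_flip {k : ℕ} {w w' : ℕ → Bool} (h : ∀ i ≤ k, w i = w' i)
    (hk : w' (k + 1) = !(w (k + 1))) :
    segParityMap w' k = !(segParityMap w k) := by
  unfold segParityMap
  have hc : ((Finset.range k).filter fun j => w j ≠ w (j + 1))
      = ((Finset.range k).filter fun j => w' j ≠ w' (j + 1)) := by
    apply Finset.filter_congr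
    intro j hj
    rw [Finset.mem_range] at hj
    rw [h j (by omega), h (j + 1) (by omega)]
  have hks : w' k = w k := (h k le_rfl).symm
  rw [Finset.range_add_one, Finset.filter_insert, Finset.filter_insert]
  by_cases hwk : w k = w (k + 1)
  · have h1 : ¬ (w k ≠ w (k + 1)) := by simpa using hwk
    have h2 : (w' k ≠ w' (k + 1)) := by
      rw [hks, hk, hwk]; cases w (k + 1) <;> simp
    rw [if_neg h1, if_pos h2, ← hc,
      Finset.card_insert_of_notMem (by simp [Finset.mem_filter])]
    rw [show 1 + (((Finset.range k).filter fun j => w j ≠ w (j + 1)).card + 1)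
        = (1 + ((Finset.range k).filter fun j => w j ≠ w (j + 1)).card) + 1 by omega]
    exact decide_even_succ _
  · have h1 : (w k ≠ w (k + 1)) := hwk
    have h2 : ¬ (w' k ≠ w' (k + 1)) := by
      rw [hks, hk]; cases hv : w (k + 1) <;> cases hu : w k <;> simp_all
    rw [if_pos h1, if_neg h2, ← hc,
      Finset.card_insert_of_notMem (by simp [Finset.mem_filter])]
    rw [show 1 + (((Finset.range k).filter fun j => w j ≠ w (j + 1)).card + 1)
        = (1 + ((Finset.range k).filter fun j => w j ≠ w (j + 1)).card) + 1 by omega]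
    rw [decide_even_succ, Bool.not_not]

/-- `(segParityMap^[m] w) j` only depends on `w 0, …, w (m+j+?)`. -/
lemma iter_dep : ∀ (m j : ℕ) (w w' : ℕ → Bool), (∀ i, i ≤ m + j → w i = w' i) →
    (segParityMap^[m] w) j = (segParityMap^[m] w') j := by
  intro m
  induction m with
  | zero => intro j w w' h; exact h j (by omega)
  | succ m ih =>
    intro j w w' h
    rw [Function.iterate_succ_apply, Function.iterate_succ_apply]
    apply ih
    intro i hi
    exact seg_dep fun l hl => h l (by omega)

lemma iter_flip : ∀ (m : ℕ) (w w' : ℕ → Bool), (∀ i, i < m → w i = w' i) →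
    w' m = !(w m) → (segParityMap^[m] w') 0 = !((segParityMap^[m] w) 0) := by
  intro m
  induction m with
  | zero => intro w w' _ hm; exact hm
  | succ m ih =>
    intro w w' h hm
    rw [Function.iterate_succ_apply, Function.iterate_succ_apply]
    apply ih
    · intro i hi
      exact seg_dep fun l hl => h l (by omega)
    · exact seg_flip (fun i hi => h i (by omega)) hm

lemma iter_sep {k : ℕ} {w w' : ℕ → Bool} (h : ∀ i, i < k → w i = w' i)
    (hk : w k ≠ w' k) :
    (segParityMap^[k] w) 0 ≠ (segParityMap^[k] w') 0 := by
  have hflip : w' k = !(w k) := by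
    cases hw : w k <;> cases hw' : w' k <;> simp_all
  rw [iter_flip k w w' h hflip]
  cases (segParityMap^[k] w) 0 <;> simp

lemma segParityMap_continuous : Continuous segParityMap := by
  refine continuous_pi fun k => ?_
  have h2 : Continuous fun w : ℕ → Bool =>
      ((Finset.range (k + 1)).filter fun j => w j ≠ w (j + 1)).card := by
    have h1 : (fun w : ℕ → Bool =>
        ((Finset.range (k + 1)).filter fun j => w j ≠ w (j + 1)).card)
        = fun w => ∑ j ∈ Finset.range (k + 1), (if w j ≠ w (j + 1) then 1 else 0) := by
      funext w; rw [Finset.card_filter]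
    rw [h1]
    apply continuous_finset_sum
    intro j _
    have hc : Continuous fun w : ℕ → Bool => (w j, w (j + 1)) :=
      (continuous_apply j).prodMk (continuous_apply (j + 1))
    exact (continuous_of_discreteTopology
      (f := fun p : Bool × Bool => if p.1 ≠ p.2 then (1 : ℕ) else 0)).comp hc
  exact (continuous_of_discreteTopology
    (f := fun c : ℕ => decide (Even (1 + c)))).comp h2

/-- The basic entourage: agreement at coordinate `0`. -/
def U0 : Set ((ℕ → Bool) × (ℕ → Bool)) := {p | p.1 0 = p.2 0}

lemma U0_mem : U0 ∈ 𝓤 (ℕ → Bool) := by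
  rw [Pi.uniformity]
  apply Filter.mem_iInf_of_mem 0
  rw [Filter.mem_comap]
  exact ⟨SetRel.id, fun ⦃a⦄ a => a, fun p hp => hp⟩

/-- Extension of a finite word by `false`s. -/
def wext (n : ℕ) (u : Fin n → Bool) : ℕ → Bool := fun i =>
  if h : i < n then u ⟨i, h⟩ else false

lemma wext_injective (n : ℕ) : Function.Injective (wext n) := by
  intro u v huv
  funext i
  have := congrFun huv (i : ℕ)
  simpa [wext, i.isLt] using this

lemma netMaxcard_lower (n : ℕ) :
    ((2 : ℕ∞) ^ n) ≤ netMaxcard segParityMap Set.univ U0 n := by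
  classical
  set s : Finset (ℕ → Bool) := Finset.image (wext n) Finset.univ with hs
  have hcard : s.card = 2 ^ n := by
    rw [hs, Finset.card_image_of_injective _ (wext_injective n), Finset.card_univ]
    simp
  have hnet : IsDynNetIn segParityMap Set.univ U0 n ↑s := by
    refine ⟨Set.subset_univ _, ?_⟩
    intro x hx y hy hxy
    rw [Function.onFun]
    rw [Set.disjoint_left]
    intro z hzx hzy
    simp only [hs, Finset.coe_image, Finset.coe_univ, Set.image_univ, Set.mem_range] at hx hy
    obtain ⟨u, rfl⟩ := hx
    obtain ⟨v, rfl⟩ := hy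
    have huv : u ≠ v := fun h => hxy (by rw [h])
    have hP : ∃ i, wext n u i ≠ wext n v i := by
      obtain ⟨j, hj⟩ := Function.ne_iff.1 huv
      exact ⟨j, by simpa [wext, j.isLt] using hj⟩
    classical
    set k := Nat.find hP with hkdef
    have hk : wext n u k ≠ wext n v k := Nat.find_spec hP
    have hkn : k < n := by
      by_contra hkn
      exact hk (by simp [wext, show ¬ (k < n) from hkn])
    have hmin : ∀ i, i < k → wext n u i = wext n v i := by
      intro i hi
      have := Nat.find_min hP hi
      simpa using this
    have hsep := iter_sep hmin hk
    rw [mem_ball_dynEntourage] at hzx hzy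
    have h1 := hzx k hkn
    have h2 := hzy k hkn
    simp only [UniformSpace.ball, Set.mem_preimage, U0, Set.mem_setOf_eq] at h1 h2
    exact hsep (h1.trans h2.symm)
  calc ((2 : ℕ∞) ^ n) = (s.card : ℕ∞) := by rw [hcard]; push_cast; ring
    _ ≤ _ := hnet.card_le_netMaxcard

theorem stmt9 :
    Continuous segParityMap ∧
      (Real.log 2 : EReal) ≤ Dynamics.coverEntropy segParityMap Set.univ := by
  refine ⟨segParityMap_continuous, ?_⟩
  refine le_trans ?_ (netEntropyEntourage_le_coverEntropy segParityMap Set.univ U0_mem)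
  rw [netEntropyEntourage]
  have hev : ∀ᶠ n : ℕ in atTop, (Real.log 2 : EReal) ≤
      ENNReal.log (netMaxcard segParityMap Set.univ U0 n) / (n : EReal) := by
    rw [eventually_atTop]
    refine ⟨1, fun n hn => ?_⟩
    rw [EReal.le_div_iff_mul_le (by exact_mod_cast hn) (EReal.natCast_ne_top n)]
    have h1 : ((2 : ENNReal) ^ n) ≤ (netMaxcard segParityMap Set.univ U0 n : ENNReal) := by
      have := ENat.toENNReal_mono (netMaxcard_lower n)
      simpa using this
    have h2 := ENNReal.log_monotone h1
    rw [ENNReal.log_pow] at h2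
    have h3 : ENNReal.log 2 = (Real.log 2 : EReal) := by
      rw [ENNReal.log_pos_real (by simp) (by simp)]
      norm_num
    rw [h3] at h2
    calc (Real.log 2 : EReal) * n = (n : EReal) * (Real.log 2 : EReal) := by
          rw [EReal.mul_comm]
      _ ≤ _ := h2
  calc (Real.log 2 : EReal) = limsup (fun _ : ℕ => (Real.log 2 : EReal)) atTop :=
        (limsup_const _).symm
    _ ≤ _ := limsup_le_limsup hev
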